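/- Let L be a complete lattice and let f : L^m × L → L be completely join-preserving. For each x ∈ L^m let μ_f(x) = ⋀ { a ∈ L | f(x, a) ≤ a } be the least fixed point of a ↦ f(x, a). Then for every subset S ⊆ L^m and every ordinal α, the α-th transfinite iterate satisfies f^α(⋁S, ⊥) = ⋁ { f^α(s, ⊥) | s ∈ S }, where f^0(x,⊥) = ⊥, f^(α+1)(x,⊥) = f(x, f^α(x,⊥)), and f^λ(x,⊥) = ⋁_{β<λ} f^β(x,⊥) at limit ordinals λ. -/

import Mathlib

noncomputable def iterF {L : Type*} [CompleteLattice L] {m : ℕ}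
    (f : (Fin m → L) × L → L) (x : Fin m → L) (o : Ordinal) : L :=
  Ordinal.limitRecOn o ⊥ (fun _ ih => f (x, ih)) (fun o _ ih => ⨆ o' : Set.Iio o, ih o'.1 o'.2)

lemma iterF_zero {L : Type*} [CompleteLattice L] {m : ℕ}
    (f : (Fin m → L) × L → L) (x : Fin m → L) : iterF f x 0 = ⊥ :=
  Ordinal.limitRecOn_zero _ _ _

lemma iterF_succ {L : Type*} [CompleteLattice L] {m : ℕ}
    (f : (Fin m → L) × L → L) (x : Fin m → L) (o : Ordinal) :
    iterF f x (Order.succ o) = f (x, iterF f x o) :=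
  Ordinal.limitRecOn_succ _ _ _ _

lemma iterF_limit {L : Type*} [CompleteLattice L] {m : ℕ}
    (f : (Fin m → L) × L → L) (x : Fin m → L) {o : Ordinal} (ho : Order.IsSuccLimit o) :
    iterF f x o = ⨆ o' : Set.Iio o, iterF f x o'.1 :=
  Ordinal.limitRecOn_limit _ _ _ _ ho

theorem stmt3 {L : Type*} [CompleteLattice L] (m : ℕ)
    (f : (Fin m → L) × L → L)
    (hf : ∀ S : Set ((Fin m → L) × L), f (sSup S) = ⨆ s ∈ S, f s) :
    ∀ (S : Set (Fin m → L)) (α : Ordinal),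
      iterF f (sSup S) α = ⨆ s ∈ S, iterF f s α := by
  intro S α
  induction α using Ordinal.limitRecOn with
  | zero => simp [iterF_zero]
  | add_one o ih =>
      rw [Ordinal.add_one_eq_succ]
      rw [iterF_succ, ih]
      have h1 : sSup ((fun s => (s, iterF f s o)) '' S)
          = (sSup S, ⨆ s ∈ S, iterF f s o) := by
        apply Prod.ext
        · rw [Prod.fst_sSup]
          congr 1
          ext y
          simp
        · rw [Prod.snd_sSup, Set.image_image]
          simp [sSup_image]
      have h := hf ((fun s => (s, iterF f s o)) '' S)
      rw [h1, iSup_image] at h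
      rw [h]
      apply iSup_congr
      intro s
      apply iSup_congr
      intro hs
      rw [iterF_succ]
  | limit o ho ih =>
      rw [iterF_limit f _ ho]
      have : ∀ s, s ∈ S → iterF f s o = ⨆ o' : Set.Iio o, iterF f s o'.1 := by
        intro s _
        exact iterF_limit f s ho
      calc (⨆ o' : Set.Iio o, iterF f (sSup S) o'.1)
          = ⨆ o' : Set.Iio o, ⨆ s ∈ S, iterF f s o'.1 := by
            exact iSup_congr fun o' => ih o'.1 o'.2
        _ = ⨆ s ∈ S, ⨆ o' : Set.Iio o, iterF f s o'.1 := by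
            rw [iSup_comm]
            exact iSup_congr fun s => iSup_comm
        _ = ⨆ s ∈ S, iterF f s o := by
            exact biSup_congr fun s hs => (this s hs).symm
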